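/- Let I = (xy, yz, zx) ⊆ k[x,y,z]. Then NP(I^{(2)}) = 2·SP(I), whereas NP(I) ≠ SP(I). -/

import Mathlib

open MvPolynomial Pointwise

/-- The Newton polyhedron of a monomial ideal: convex hull of exponent vectors of monomials in `I`. -/
def NP {n : ℕ} {𝕜 : Type*} [Field 𝕜] (I : Ideal (MvPolynomial (Fin n) 𝕜)) : Set (Fin n → ℝ) :=
  convexHull ℝ {x | ∃ a : Fin n →₀ ℕ, monomial a (1 : 𝕜) ∈ I ∧ x = fun i => (a i : ℝ)}

/-- `I` is a monomial ideal: generated by monomials. -/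
def IsMonomialIdeal {n : ℕ} {𝕜 : Type*} [Field 𝕜] (I : Ideal (MvPolynomial (Fin n) 𝕜)) : Prop :=
  ∃ S : Set (Fin n →₀ ℕ), I = Ideal.span ((fun a => monomial a (1 : 𝕜)) '' S)

/-- The integral closure of an ideal `I`: elements satisfying an equation of integral dependence
`f^m + c₁ f^{m-1} + ⋯ + c_m = 0` with `c_i ∈ I^i`. -/
def intCl {R : Type*} [CommRing R] (I : Ideal R) : Set R :=
  {f | ∃ m : ℕ, 0 < m ∧ ∃ c : ℕ → R, (∀ i ∈ Finset.Icc 1 m, c i ∈ I ^ i) ∧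
    f ^ m + ∑ i ∈ Finset.Icc 1 m, c i * f ^ (m - i) = 0}

/-- The Newton–Okounkov body of a graded family of monomial ideals. -/
def NObody {n : ℕ} {𝕜 : Type*} [Field 𝕜] (F : ℕ → Ideal (MvPolynomial (Fin n) 𝕜)) :
    Set (Fin n → ℝ) :=
  closure (⋃ k : ℕ, {x | 0 < k ∧ ∃ a : Fin n →₀ ℕ, monomial a (1 : 𝕜) ∈ F k ∧
    x = fun i => (a i : ℝ) / k})

/-- The limiting body `⋃ₖ (1/k) NP(I_k)` of a graded family. -/
def limitBody {n : ℕ} {𝕜 : Type*} [Field 𝕜] (F : ℕ → Ideal (MvPolynomial (Fin n) 𝕜)) :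
    Set (Fin n → ℝ) :=
  ⋃ k : ℕ, ⋃ (_ : 0 < k), ((k : ℝ)⁻¹) • NP (F k)

/-- A polyhedron: a finite intersection of closed half-spaces. -/
def IsPolyhedron {n : ℕ} (P : Set (Fin n → ℝ)) : Prop :=
  ∃ H : Finset ((Fin n → ℝ) × ℝ), P = {x | ∀ h ∈ H, h.2 ≤ ∑ i, h.1 i * x i}

/-- Maximum dimension of a compact face (faces are taken to be extreme subsets). -/
noncomputable def mdc {n : ℕ} (P : Set (Fin n → ℝ)) : ℕ :=
  sSup {d | ∃ F : Set (Fin n → ℝ), F.Nonempty ∧ IsExtreme ℝ P F ∧ IsCompact F ∧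
    Module.finrank ℝ (vectorSpan ℝ F) = d}

/-- The symbolic power family of a monomial ideal of linear-power type:
`I^{(k)} = ⋂ⱼ 𝔭ⱼ^{k ωⱼ}` where `𝔭ⱼ` is generated by the variables in `supp j`. -/
noncomputable def symb {n : ℕ} {𝕜 : Type*} [Field 𝕜] {ι : Type*} [Fintype ι]
    (supp : ι → Finset (Fin n)) (ω : ι → ℕ) (k : ℕ) : Ideal (MvPolynomial (Fin n) 𝕜) :=
  ⨅ j, (Ideal.span ((fun i => (X i : MvPolynomial (Fin n) 𝕜)) '' (supp j : Set (Fin n)))) ^ (k * ω j)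

/-- The symbolic polyhedron of a monomial ideal of linear-power type. -/
def SPset {n : ℕ} {ι : Type*} (supp : ι → Finset (Fin n)) (ω : ι → ℕ) : Set (Fin n → ℝ) :=
  {x | (∀ i, 0 ≤ x i) ∧ ∀ j, (ω j : ℝ) ≤ ∑ i ∈ supp j, x i}

section Helpers


variable {𝕜 : Type*} [Field 𝕜]

lemma coeff_span_mono' {T : Set (Fin 3 →₀ ℕ)} {p : MvPolynomial (Fin 3) 𝕜}
    (hp : p ∈ Ideal.span ((fun s => monomial s (1 : 𝕜)) '' T)) :
    ∀ a, coeff a p ≠ 0 → ∃ s ∈ T, s ≤ a := by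
  refine Submodule.span_induction ?_ ?_ ?_ ?_ hp
  · rintro x ⟨s, hs, rfl⟩ a ha
    by_cases h : s = a
    · exact ⟨s, hs, h.le⟩
    · rw [coeff_monomial, if_neg h] at ha; exact absurd rfl ha
  · intro a ha; simp at ha
  · intro x y _ _ hx hy a ha
    rw [coeff_add] at ha
    rcases (by by_contra h; push_neg at h; rw [h.1, h.2, add_zero] at ha; exact ha rfl :
      coeff a x ≠ 0 ∨ coeff a y ≠ 0) with h | h
    · exact hx a h
    · exact hy a h
  · intro c x _ hx a ha
    rw [smul_eq_mul, coeff_mul] at ha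
    obtain ⟨⟨u, v⟩, huv, hne⟩ := Finset.exists_ne_zero_of_sum_ne_zero ha
    have hv : coeff v x ≠ 0 := fun h => hne (by simp [h])
    obtain ⟨s, hs, hsv⟩ := hx v hv
    exact ⟨s, hs, hsv.trans (by rw [← Finset.HasAntidiagonal.mem_antidiagonal.1 huv]; exact le_add_self)⟩

lemma XmulX (i j : Fin 3) : (X i : MvPolynomial (Fin 3) 𝕜) * X j =
    monomial (Finsupp.single i 1 + Finsupp.single j 1) 1 := by
  rw [monomial_single_add, pow_one]; simp [X]

lemma pair_sq_le (i j : Fin 3) :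
    (Ideal.span {(X i : MvPolynomial (Fin 3) 𝕜), X j}) ^ 2 ≤
      Ideal.span ((fun s => monomial s (1 : 𝕜)) ''
        {Finsupp.single i 2, Finsupp.single i 1 + Finsupp.single j 1, Finsupp.single j 2}) := by
  rw [sq, Ideal.mul_le]
  intro r hr s hs
  obtain ⟨a, b, rfl⟩ := Ideal.mem_span_pair.1 hr
  obtain ⟨c, d, rfl⟩ := Ideal.mem_span_pair.1 hs
  set K := Ideal.span ((fun s => monomial s (1 : 𝕜)) ''
        {Finsupp.single i 2, Finsupp.single i 1 + Finsupp.single j 1, Finsupp.single j 2})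
  have h1 : (monomial (Finsupp.single i 2) (1:𝕜) : MvPolynomial (Fin 3) 𝕜) ∈ K :=
    Ideal.subset_span ⟨_, by simp, rfl⟩
  have h2 : (monomial (Finsupp.single i 1 + Finsupp.single j 1) (1:𝕜) :
      MvPolynomial (Fin 3) 𝕜) ∈ K := Ideal.subset_span ⟨_, by simp, rfl⟩
  have h3 : (monomial (Finsupp.single j 2) (1:𝕜) : MvPolynomial (Fin 3) 𝕜) ∈ K :=
    Ideal.subset_span ⟨_, by simp, rfl⟩
  have e1 : (X i : MvPolynomial (Fin 3) 𝕜) * X i = monomial (Finsupp.single i 2) 1 := by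
    rw [← X_pow_eq_monomial]; ring
  have e3 : (X j : MvPolynomial (Fin 3) 𝕜) * X j = monomial (Finsupp.single j 2) 1 := by
    rw [← X_pow_eq_monomial]; ring
  have key : (a * X i + b * X j) * (c * X i + d * X j) =
      (a * c) * (X i * X i) + (a * d + b * c) * (X i * X j) + (b * d) * (X j * X j) := by ring
  rw [key, e1, XmulX, e3]
  exact add_mem (add_mem (Ideal.mul_mem_left _ _ h1) (Ideal.mul_mem_left _ _ h2))
    (Ideal.mul_mem_left _ _ h3)

lemma mem_pair_sq_iff (i j : Fin 3) (hij : i ≠ j) (a : Fin 3 →₀ ℕ) :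
    monomial a (1 : 𝕜) ∈ (Ideal.span {(X i : MvPolynomial (Fin 3) 𝕜), X j}) ^ 2 ↔
      2 ≤ a i + a j := by
  constructor
  · intro h
    obtain ⟨s, hs, hsa⟩ := coeff_span_mono' (pair_sq_le i j h) a (by simp [coeff_monomial])
    have hi := hsa i
    have hj := hsa j
    rcases hs with rfl | rfl | rfl
    · simp [Finsupp.single_apply] at hi; omega
    · simp [Finsupp.single_apply, hij, hij.symm] at hi hj; omega
    · simp [Finsupp.single_apply] at hj; omega
  · intro h
    have hXi : (X i : MvPolynomial (Fin 3) 𝕜) ∈ Ideal.span {X i, X j} :=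
      Ideal.subset_span (by simp)
    have hXj : (X j : MvPolynomial (Fin 3) 𝕜) ∈ Ideal.span {X i, X j} :=
      Ideal.subset_span (by simp)
    rcases le_or_gt 2 (a i) with h2 | h2
    · have hs : Finsupp.single i 2 ≤ a := by rw [Finsupp.single_le_iff]; exact h2
      have e : monomial a (1 : 𝕜) = monomial (a - Finsupp.single i 2) 1 *
          monomial (Finsupp.single i 2) 1 := by
        rw [monomial_mul, mul_one, tsub_add_cancel_of_le hs]
      rw [e, ← X_pow_eq_monomial]
      exact Ideal.mul_mem_left _ _ (Ideal.pow_mem_pow hXi 2)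
    rcases le_or_gt 2 (a j) with h3 | h3
    · have hs : Finsupp.single j 2 ≤ a := by rw [Finsupp.single_le_iff]; exact h3
      have e : monomial a (1 : 𝕜) = monomial (a - Finsupp.single j 2) 1 *
          monomial (Finsupp.single j 2) 1 := by
        rw [monomial_mul, mul_one, tsub_add_cancel_of_le hs]
      rw [e, ← X_pow_eq_monomial]
      exact Ideal.mul_mem_left _ _ (Ideal.pow_mem_pow hXj 2)
    · have hi1 : 1 ≤ a i := by omega
      have hj1 : 1 ≤ a j := by omega
      have hs : Finsupp.single i 1 + Finsupp.single j 1 ≤ a := by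
        intro k
        rcases eq_or_ne k i with rfl | hki
        · simp [Finsupp.single_apply, hij.symm, hi1]
        rcases eq_or_ne k j with rfl | hkj
        · simp [Finsupp.single_apply, hij, hj1]
        · simp [Finsupp.single_apply, Ne.symm hki, Ne.symm hkj]
      have e : monomial a (1 : 𝕜) =
          monomial (a - (Finsupp.single i 1 + Finsupp.single j 1)) 1 * (X i * X j) := by
        rw [XmulX, monomial_mul, mul_one, tsub_add_cancel_of_le hs]
      rw [e, sq]
      exact Ideal.mul_mem_left _ _ (Ideal.mul_mem_mul hXi hXj)

end Helpers

section Part2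


variable {𝕜 : Type*} [Field 𝕜]

lemma mem_symb_iff (a : Fin 3 →₀ ℕ) :
    monomial a (1 : 𝕜) ∈ symb (𝕜 := 𝕜) ![({0, 1} : Finset (Fin 3)), {1, 2}, {2, 0}]
      (fun _ => 1) 2 ↔ 2 ≤ a 0 + a 1 ∧ 2 ≤ a 1 + a 2 ∧ 2 ≤ a 2 + a 0 := by
  rw [symb, Submodule.mem_iInf]
  constructor
  · intro h
    refine ⟨(mem_pair_sq_iff (𝕜 := 𝕜) 0 1 (by decide) a).1 ?_, (mem_pair_sq_iff (𝕜 := 𝕜) 1 2 (by decide) a).1 ?_,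
      (mem_pair_sq_iff (𝕜 := 𝕜) 2 0 (by decide) a).1 ?_⟩
    · have := h 0
      simpa [Set.image_insert_eq] using this
    · have := h 1
      simpa [Set.image_insert_eq] using this
    · have := h 2
      simpa [Set.image_insert_eq] using this
  · rintro ⟨c1, c2, c3⟩ j
    fin_cases j
    · simpa [Set.image_insert_eq] using (mem_pair_sq_iff 0 1 (by decide) a).2 c1
    · simpa [Set.image_insert_eq] using (mem_pair_sq_iff 1 2 (by decide) a).2 c2
    · simpa [Set.image_insert_eq] using (mem_pair_sq_iff 2 0 (by decide) a).2 c3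

end Part2

section Geometry

variable {𝕜 : Type*} [Field 𝕜]

/-- The generating set of the Newton polyhedron. -/
def NPgen (J : Ideal (MvPolynomial (Fin 3) 𝕜)) : Set (Fin 3 → ℝ) :=
  {x | ∃ a : Fin 3 →₀ ℕ, monomial a (1 : 𝕜) ∈ J ∧ x = fun i => (a i : ℝ)}

lemma NP_eq (J : Ideal (MvPolynomial (Fin 3) 𝕜)) : NP J = convexHull ℝ (NPgen J) := rfl

lemma NPgen_step {J : Ideal (MvPolynomial (Fin 3) 𝕜)} {z : Fin 3 → ℝ} (hz : z ∈ NPgen J)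
    (i : Fin 3) : z + (Pi.single i (1 : ℝ) : Fin 3 → ℝ) ∈ NPgen J := by
  obtain ⟨a, ha, rfl⟩ := hz
  refine ⟨a + Finsupp.single i 1, ?_, ?_⟩
  · have e : monomial (a + Finsupp.single i 1) (1 : 𝕜) =
        monomial a 1 * monomial (Finsupp.single i 1) 1 := by rw [monomial_mul, mul_one]
    rw [e]
    exact Ideal.mul_mem_right _ _ ha
  · funext m
    rcases eq_or_ne m i with rfl | hm
    · simp [Finsupp.single_apply]
    · simp [Finsupp.single_apply, hm, Ne.symm hm]

lemma hull_step {J : Ideal (MvPolynomial (Fin 3) 𝕜)} {y : Fin 3 → ℝ}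
    (hy : y ∈ convexHull ℝ (NPgen J)) (i : Fin 3) :
    y + (Pi.single i (1 : ℝ) : Fin 3 → ℝ) ∈ convexHull ℝ (NPgen J) := by
  have hmem : y + (Pi.single i (1 : ℝ) : Fin 3 → ℝ) ∈
      convexHull ℝ (NPgen J) + convexHull ℝ ({(Pi.single i (1 : ℝ) : Fin 3 → ℝ)} : Set (Fin 3 → ℝ)) :=
    Set.add_mem_add hy (by simp [convexHull_singleton])
  rw [← convexHull_add] at hmem
  refine convexHull_mono ?_ hmem
  rintro w hw
  rw [Set.add_singleton] at hw
  obtain ⟨z, hz, rfl⟩ := hw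
  exact NPgen_step hz i

lemma hull_nat_step {J : Ideal (MvPolynomial (Fin 3) 𝕜)} {y : Fin 3 → ℝ}
    (hy : y ∈ convexHull ℝ (NPgen J)) (i : Fin 3) (n : ℕ) :
    y + (n : ℝ) • (Pi.single i (1 : ℝ) : Fin 3 → ℝ) ∈ convexHull ℝ (NPgen J) := by
  induction n with
  | zero => simpa using hy
  | succ n ih =>
      have e : y + ((n + 1 : ℕ) : ℝ) • (Pi.single i (1 : ℝ) : Fin 3 → ℝ) =
          (y + (n : ℝ) • (Pi.single i (1 : ℝ) : Fin 3 → ℝ)) + (Pi.single i (1 : ℝ) : Fin 3 → ℝ) := by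
        push_cast
        rw [add_smul, one_smul]
        abel
      rw [e]
      exact hull_step ih i

lemma hull_absorb {J : Ideal (MvPolynomial (Fin 3) 𝕜)} {y : Fin 3 → ℝ}
    (hy : y ∈ convexHull ℝ (NPgen J)) (i : Fin 3) {t : ℝ} (ht : 0 ≤ t) :
    y + t • (Pi.single i (1 : ℝ) : Fin 3 → ℝ) ∈ convexHull ℝ (NPgen J) := by
  obtain ⟨n, hn⟩ := exists_nat_ge t
  rcases Nat.eq_zero_or_pos n with rfl | hnpos
  · have : t = 0 := le_antisymm (by exact_mod_cast hn) ht
    simpa [this] using hy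
  · have hn0 : (0 : ℝ) < n := by exact_mod_cast hnpos
    set c := t / n with hc
    have hc0 : 0 ≤ c := div_nonneg ht hn0.le
    have hc1 : c ≤ 1 := (div_le_one hn0).2 hn
    have key : (1 - c) • y + c • (y + (n : ℝ) • (Pi.single i (1 : ℝ) : Fin 3 → ℝ)) =
        y + (c * n) • (Pi.single i (1 : ℝ) : Fin 3 → ℝ) := by module
    have hcn : c * n = t := div_mul_cancel₀ t hn0.ne'
    have hmem := (convex_convexHull ℝ (NPgen (𝕜 := 𝕜) J)) hy (hull_nat_step hy i n)
      (a := 1 - c) (b := c) (by linarith) hc0 (by ring)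
    rw [key, hcn] at hmem
    exact hmem

end Geometry

section Final

variable {𝕜 : Type*} [Field 𝕜]

/-- The target polyhedron `2 · SP(I)`. -/
def Qset : Set (Fin 3 → ℝ) :=
  {x | (∀ i, 0 ≤ x i) ∧ 2 ≤ x 0 + x 1 ∧ 2 ≤ x 1 + x 2 ∧ 2 ≤ x 2 + x 0}

lemma Qconv : Convex ℝ Qset := by
  rintro x ⟨hx0, hx1, hx2, hx3⟩ y ⟨hy0, hy1, hy2, hy3⟩ a b ha hb hab
  refine ⟨fun i => ?_, ?_, ?_, ?_⟩ <;>
    simp only [Pi.add_apply, Pi.smul_apply, smul_eq_mul]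
  · nlinarith [hx0 i, hy0 i]
  · nlinarith
  · nlinarith
  · nlinarith

lemma SP_mem (x : Fin 3 → ℝ) :
    x ∈ SPset ![({0, 1} : Finset (Fin 3)), {1, 2}, {2, 0}] (fun _ => 1) ↔
      (∀ i, 0 ≤ x i) ∧ 1 ≤ x 0 + x 1 ∧ 1 ≤ x 1 + x 2 ∧ 1 ≤ x 2 + x 0 := by
  have s0 : ∑ i ∈ ({0, 1} : Finset (Fin 3)), x i = x 0 + x 1 := Finset.sum_pair (by decide)
  have s1 : ∑ i ∈ ({1, 2} : Finset (Fin 3)), x i = x 1 + x 2 := Finset.sum_pair (by decide)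
  have s2 : ∑ i ∈ ({2, 0} : Finset (Fin 3)), x i = x 2 + x 0 := Finset.sum_pair (by decide)
  simp only [SPset, Set.mem_setOf_eq]
  constructor
  · rintro ⟨h0, h1⟩
    refine ⟨h0, ?_, ?_, ?_⟩
    · have := h1 0; rw [show (![({0, 1} : Finset (Fin 3)), {1, 2}, {2, 0}]) 0 = {0, 1} from rfl,
        s0] at this; simpa using this
    · have := h1 1; rw [show (![({0, 1} : Finset (Fin 3)), {1, 2}, {2, 0}]) 1 = {1, 2} from rfl,
        s1] at this; simpa using this
    · have := h1 2; rw [show (![({0, 1} : Finset (Fin 3)), {1, 2}, {2, 0}]) 2 = {2, 0} from rfl,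
        s2] at this; simpa using this
  · rintro ⟨h0, h1, h2, h3⟩
    refine ⟨h0, fun j => ?_⟩
    fin_cases j
    · simpa [s0] using h1
    · simpa [s1] using h2
    · simpa [s2] using h3

lemma twoSP : (2 : ℝ) • SPset ![({0, 1} : Finset (Fin 3)), {1, 2}, {2, 0}] (fun _ => 1) = Qset := by
  ext x
  rw [Set.mem_smul_set]
  constructor
  · rintro ⟨y, hy, rfl⟩
    obtain ⟨h0, h1, h2, h3⟩ := (SP_mem y).1 hy
    refine ⟨fun i => ?_, ?_, ?_, ?_⟩ <;> simp only [Pi.smul_apply, smul_eq_mul] <;>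
      [nlinarith [h0 i]; nlinarith; nlinarith; nlinarith]
  · rintro ⟨h0, h1, h2, h3⟩
    refine ⟨(2 : ℝ)⁻¹ • x, (SP_mem _).2 ⟨fun i => ?_, ?_, ?_, ?_⟩, smul_inv_smul₀ (two_ne_zero (α := ℝ)) x⟩ <;>
      simp only [Pi.smul_apply, smul_eq_mul] <;> [nlinarith [h0 i]; nlinarith; nlinarith; nlinarith]

/-- Real vector attached to a natural exponent vector. -/
noncomputable def mkv (f : Fin 3 → ℕ) : Fin 3 → ℝ := fun i => ((Finsupp.equivFunOnFinite.symm f) i : ℝ)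

lemma mkv_mem (f : Fin 3 → ℕ) (h : 2 ≤ f 0 + f 1 ∧ 2 ≤ f 1 + f 2 ∧ 2 ≤ f 2 + f 0) :
    mkv f ∈ NPgen (symb (𝕜 := 𝕜) ![({0, 1} : Finset (Fin 3)), {1, 2}, {2, 0}] (fun _ => 1) 2) :=
  ⟨Finsupp.equivFunOnFinite.symm f, (mem_symb_iff _).2 (by simpa using h), rfl⟩

lemma Q_subset : Qset ⊆ convexHull ℝ
    (NPgen (symb (𝕜 := 𝕜) ![({0, 1} : Finset (Fin 3)), {1, 2}, {2, 0}] (fun _ => 1) 2)) := by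
  intro x hx
  obtain ⟨hpos, hq01, hq12, hq20⟩ := hx
  set S := NPgen (symb (𝕜 := 𝕜) ![({0, 1} : Finset (Fin 3)), {1, 2}, {2, 0}] (fun _ => 1) 2)
    with hS
  have hw : mkv ![1, 1, 1] ∈ S := mkv_mem _ (by decide)
  have hv01 : mkv ![2, 2, 0] ∈ S := mkv_mem _ (by norm_num)
  have hv12 : mkv ![0, 2, 2] ∈ S := mkv_mem _ (by decide)
  have hv20 : mkv ![2, 0, 2] ∈ S := mkv_mem _ (by decide)
  by_cases h0 : x 0 ≤ 1
  · have hbase : (x 0) • mkv ![1, 1, 1] + (1 - x 0) • mkv ![0, 2, 2] ∈ convexHull ℝ S :=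
      (convex_convexHull ℝ S) (subset_convexHull ℝ S hw) (subset_convexHull ℝ S hv12)
        (hpos 0) (by linarith) (by ring)
    have hx' : x = ((x 0) • mkv ![1, 1, 1] + (1 - x 0) • mkv ![0, 2, 2])
        + (x 1 - (2 - x 0)) • (Pi.single 1 (1 : ℝ) : Fin 3 → ℝ)
        + (x 2 - (2 - x 0)) • (Pi.single 2 (1 : ℝ) : Fin 3 → ℝ) := by
      funext i; fin_cases i <;>
        simp [mkv, Pi.single_apply, Finsupp.coe_equivFunOnFinite_symm] <;> ring
    rw [hx']
    exact hull_absorb (hull_absorb hbase 1 (by linarith)) 2 (by linarith)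
  by_cases h1 : x 1 ≤ 1
  · have hbase : (x 1) • mkv ![1, 1, 1] + (1 - x 1) • mkv ![2, 0, 2] ∈ convexHull ℝ S :=
      (convex_convexHull ℝ S) (subset_convexHull ℝ S hw) (subset_convexHull ℝ S hv20)
        (hpos 1) (by linarith) (by ring)
    have hx' : x = ((x 1) • mkv ![1, 1, 1] + (1 - x 1) • mkv ![2, 0, 2])
        + (x 0 - (2 - x 1)) • (Pi.single 0 (1 : ℝ) : Fin 3 → ℝ)
        + (x 2 - (2 - x 1)) • (Pi.single 2 (1 : ℝ) : Fin 3 → ℝ) := by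
      funext i; fin_cases i <;>
        simp [mkv, Pi.single_apply, Finsupp.coe_equivFunOnFinite_symm] <;> ring
    rw [hx']
    exact hull_absorb (hull_absorb hbase 0 (by linarith)) 2 (by linarith)
  by_cases h2 : x 2 ≤ 1
  · have hbase : (x 2) • mkv ![1, 1, 1] + (1 - x 2) • mkv ![2, 2, 0] ∈ convexHull ℝ S :=
      (convex_convexHull ℝ S) (subset_convexHull ℝ S hw) (subset_convexHull ℝ S hv01)
        (hpos 2) (by linarith) (by ring)
    have hx' : x = ((x 2) • mkv ![1, 1, 1] + (1 - x 2) • mkv ![2, 2, 0])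
        + (x 0 - (2 - x 2)) • (Pi.single 0 (1 : ℝ) : Fin 3 → ℝ)
        + (x 1 - (2 - x 2)) • (Pi.single 1 (1 : ℝ) : Fin 3 → ℝ) := by
      funext i; fin_cases i <;>
        simp [mkv, Pi.single_apply, Finsupp.coe_equivFunOnFinite_symm] <;> ring
    rw [hx']
    exact hull_absorb (hull_absorb hbase 0 (by linarith)) 1 (by linarith)
  · have hbase : mkv ![1, 1, 1] ∈ convexHull ℝ S := subset_convexHull ℝ S hw
    have hx' : x = mkv ![1, 1, 1]
        + (x 0 - 1) • (Pi.single 0 (1 : ℝ) : Fin 3 → ℝ)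
        + (x 1 - 1) • (Pi.single 1 (1 : ℝ) : Fin 3 → ℝ)
        + (x 2 - 1) • (Pi.single 2 (1 : ℝ) : Fin 3 → ℝ) := by
      funext i; fin_cases i <;>
        simp [mkv, Pi.single_apply, Finsupp.coe_equivFunOnFinite_symm] <;> ring
    rw [hx']
    exact hull_absorb (hull_absorb (hull_absorb hbase 0 (by linarith)) 1 (by linarith)) 2
      (by linarith)

end Final

/-- for `I = (xy, yz, zx)`, `NP(I^{(2)}) = 2 · SP(I)` while `NP(I) ≠ SP(I)`. -/
theorem stmt14 {𝕜 : Type*} [Field 𝕜]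
    (I : Ideal (MvPolynomial (Fin 3) 𝕜))
    (hI : I = Ideal.span {X 0 * X 1, X 1 * X 2, X 2 * X 0}) :
    NP (symb (𝕜 := 𝕜) ![({0, 1} : Finset (Fin 3)), {1, 2}, {2, 0}] (fun _ => 1) 2) =
        (2 : ℝ) • SPset ![({0, 1} : Finset (Fin 3)), {1, 2}, {2, 0}] (fun _ => 1) ∧
      NP I ≠ SPset ![({0, 1} : Finset (Fin 3)), {1, 2}, {2, 0}] (fun _ => 1) := by
  constructor
  · rw [NP_eq, twoSP]
    apply subset_antisymm
    · refine convexHull_min ?_ Qconv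
      rintro y ⟨a, ha, rfl⟩
      obtain ⟨c1, c2, c3⟩ := (mem_symb_iff a).1 ha
      refine ⟨fun i => Nat.cast_nonneg _, ?_, ?_, ?_⟩
      · show (2 : ℝ) ≤ (a 0 : ℝ) + (a 1 : ℝ); exact_mod_cast c1
      · show (2 : ℝ) ≤ (a 1 : ℝ) + (a 2 : ℝ); exact_mod_cast c2
      · show (2 : ℝ) ≤ (a 2 : ℝ) + (a 0 : ℝ); exact_mod_cast c3
    · exact Q_subset
  · intro h
    have hu : (fun _ => (1 / 2 : ℝ)) ∈
        SPset ![({0, 1} : Finset (Fin 3)), {1, 2}, {2, 0}] (fun _ => 1) :=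
      (SP_mem _).2 (by norm_num)
    rw [← h] at hu
    have hsub : NP I ⊆ {x : Fin 3 → ℝ | 2 ≤ x 0 + x 1 + x 2} := by
      rw [NP_eq]
      refine convexHull_min ?_ ?_
      · rintro y ⟨a, ha, rfl⟩
        rw [hI] at ha
        have hIm : ({(X 0 : MvPolynomial (Fin 3) 𝕜) * X 1, X 1 * X 2, X 2 * X 0} :
            Set (MvPolynomial (Fin 3) 𝕜)) = (fun s => monomial s (1 : 𝕜)) ''
            {Finsupp.single 0 1 + Finsupp.single 1 1, Finsupp.single 1 1 + Finsupp.single 2 1,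
              Finsupp.single 2 1 + Finsupp.single 0 1} := by
          rw [Set.image_insert_eq, Set.image_insert_eq, Set.image_singleton,
            ← XmulX, ← XmulX, ← XmulX]
        rw [hIm] at ha
        obtain ⟨s, hs, hsa⟩ := coeff_span_mono' ha a (by simp [coeff_monomial])
        have h0 := hsa 0; have h1 := hsa 1; have h2 := hsa 2
        simp only [Set.mem_setOf_eq]
        have key : 2 ≤ a 0 + a 1 + a 2 := by
          rcases hs with rfl | rfl | rfl <;>
            [(simp [Finsupp.single_apply] at h0 h1; omega);
             (simp [Finsupp.single_apply] at h1 h2; omega);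
             (simp [Finsupp.single_apply] at h0 h2; omega)]
        exact_mod_cast key
      · intro p hp q hq a b ha hb hab
        simp only [Set.mem_setOf_eq, Pi.add_apply, Pi.smul_apply, smul_eq_mul] at *
        nlinarith
    have := hsub hu
    norm_num at this
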